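/- There is no subtraction game whose set of P-positions is the set A of nonnegative integers with only digits 0 and 1 in base 3. (Concretely: a = 2 ∉ A, and for every b ∈ {0, 1} there exist x, y ∈ A with y − x = 2 − b.) -/
import Mathlib


/-- P-positions of the subtraction game with subtraction set `S`. -/
def subP (S : Set ℕ) : ℕ → Prop
  | x => ∀ s, s ∈ S → ∀ _ : 0 < s, ∀ _ : s ≤ x, ¬ subP S (x - s)
termination_by x => x
decreasing_by all_goals omega

/-- There is no subtraction game whose P-positions are exactly the nonnegative
integers with only digits 0 and 1 in base 3. -/
theorem no_subtraction_game_digits01 :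
    ¬ ∃ S : Set ℕ, (∀ s ∈ S, 0 < s) ∧
      (∀ x, subP S x ↔ ∀ c ∈ Nat.digits 3 x, c ≤ 1) := by
  rintro ⟨S, -, hiff⟩
  have h1 : subP S 1 := (hiff 1).mpr (by simp [Nat.digits_def'])
  have h3 : subP S 3 := (hiff 3).mpr (by simp [Nat.digits_def'])
  have h4 : subP S 4 := (hiff 4).mpr (by simp [Nat.digits_def'])
  have h2 : ¬ subP S 2 := fun h => by simpa [Nat.digits_def'] using (hiff 2).mp h
  rw [subP] at h2
  push_neg at h2
  obtain ⟨s, hs, hpos, hle, hP⟩ := h2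
  interval_cases s
  · rw [subP] at h4
    exact h4 1 hs (by omega) (by omega) h3
  · rw [subP] at h3
    exact h3 2 hs (by omega) (by omega) h1
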